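/- For each p = 2^n with n ≥ 2 and each k from 1 to p, the map σ_{p,k} is a bijection from the set {1, 2, …, p} ∖ {k} onto itself. -/

import Mathlib

/-- The matrix `M₄` (1-indexed). -/
def M4 (i j : ℕ) : ℤ :=
  (([[0,1,2,3],[-1,0,3,-2],[-2,-3,0,1],[-3,2,-1,0]] : List (List ℤ)).getD (i-1) []).getD (j-1) 0

/-- The matrix `M₄*` (1-indexed). -/
def M4s (i j : ℕ) : ℤ :=
  (([[0,-2,-3,-1],[2,0,1,-3],[3,-1,0,2],[1,3,-2,0]] : List (List ℤ)).getD (i-1) []).getD (j-1) 0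

/-- For block-index difference `d`, `blockSC d = (s, c)` means that the corresponding
4×4 block of `M_p` is `s·M₄ + c·I` (and the block of `M_p*` is `s·M₄* − c·I`):
`(1,0)` if `d = 0`; `(-1,4)` if `d ≡ 1 (mod 4)`; `(-1,-4)` if `d ≡ -1 (mod 4)`;
`(1, x+4)` if `d = y·2^x`, `x ≥ 1`, `y ≡ 1 (mod 4)`;
`(1, -(x+4))` if `d = y·2^x`, `x ≥ 1`, `y ≡ -1 (mod 4)`. -/
def blockSC (d : ℤ) : ℤ × ℤ :=
  if d = 0 then (1, 0)
  else if d % 4 = 1 then (-1, 4)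
  else if d % 4 = 3 then (-1, -4)
  else
    let x : ℕ := d.natAbs.factorization 2
    if (d / (2:ℤ)^x) % 4 = 1 then (1, (x:ℤ) + 4) else (1, -((x:ℤ) + 4))

/-- Entry `(i,j)` (1-indexed) of `M_p`, for any `p = 2^n ≥ 4` and `1 ≤ i,j ≤ p`;
the defining block formula depends only on `i` and `j`, not on `p`. -/
def Ment (i j : ℕ) : ℤ :=
  let d : ℤ := (((j-1)/4 : ℕ) : ℤ) - (((i-1)/4 : ℕ) : ℤ)
  (blockSC d).1 * M4 ((i-1) % 4 + 1) ((j-1) % 4 + 1)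
    + (if (i-1) % 4 = (j-1) % 4 then (blockSC d).2 else 0)

/-- Entry `(i,j)` (1-indexed) of `M_p*`. -/
def Ments (i j : ℕ) : ℤ :=
  let d : ℤ := (((j-1)/4 : ℕ) : ℤ) - (((i-1)/4 : ℕ) : ℤ)
  (blockSC d).1 * M4s ((i-1) % 4 + 1) ((j-1) % 4 + 1)
    + (if (i-1) % 4 = (j-1) % 4 then -(blockSC d).2 else 0)

/-- The `p × p` matrix `M_p`, `p = 2^n`, as a function on 1-based indices
(entries outside the index range `1,…,p` are set to `0`). -/
def Mp (n i j : ℕ) : ℤ :=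
  if 1 ≤ i ∧ i ≤ 2^n ∧ 1 ≤ j ∧ j ≤ 2^n then Ment i j else 0

/-- The `p × p` matrix `M_p*`, `p = 2^n`, as a function on 1-based indices. -/
def Mps (n i j : ℕ) : ℤ :=
  if 1 ≤ i ∧ i ≤ 2^n ∧ 1 ≤ j ∧ j ≤ 2^n then Ments i j else 0

/-- The base mappings `σ_{4,k}` : `sigma4 k i = σ_{4,k}(i)` (value `0` at the
undefined point `i = k`). -/
def sigma4 (k i : ℕ) : ℕ :=
  (([[0,4,2,3],[3,0,4,1],[4,1,0,2],[2,3,1,0]] : List (List ℕ)).getD (k-1) []).getD (i-1) 0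

/-- The mappings `σ_{p,k}` for `p = 2^n`: `sigma n k i = σ_{2^n, k}(i)`
(value `0` at the undefined point `i = k`, and junk values for `n < 2`). -/
def sigma : ℕ → ℕ → ℕ → ℕ
  | 0, _, _ => 0
  | 1, _, _ => 0
  | 2, k, i => sigma4 k i
  | n+3, k, i =>
    let P := 2^(n+2)
    if k ≤ P then
      if i = k + P then i
      else if i ≤ P then sigma (n+2) k i + P
      else sigma (n+2) k (i - P)
    else
      if i = k - P then i
      else if i ≤ P then sigma (n+2) (k - P) i + P
      else sigma (n+2) (k - P) (i - P)

/-- For each `p = 2^n` with `n ≥ 2` and each `k` from 1 to `p`,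
`σ_{p,k}` is a bijection from `{1,…,p} \ {k}` onto itself. -/
theorem sigma_aux : ∀ n, 2 ≤ n → ∀ k, 1 ≤ k → k ≤ 2^n →
    (∀ i, 1 ≤ i → i ≤ 2^n → i ≠ k →
      1 ≤ sigma n k i ∧ sigma n k i ≤ 2^n ∧ sigma n k i ≠ k) ∧
    (∀ i j, 1 ≤ i → i ≤ 2^n → i ≠ k → 1 ≤ j → j ≤ 2^n → j ≠ k →
      sigma n k i = sigma n k j → i = j) := by
  intro n
  induction n with
  | zero => omega
  | succ m ih =>
    intro hn k hk1 hk2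
    rcases Nat.lt_or_ge m 2 with hm | hm
    · -- base case: m+1 = 2
      have hm2 : m = 1 := by omega
      subst hm2
      norm_num at hk2
      constructor
      · intro i h1 h2 h3
        interval_cases k <;> interval_cases i <;> simp_all <;> decide
      · intro i j h1 h2 h3 h4 h5 h6 heq
        interval_cases k <;> interval_cases i <;> interval_cases j <;>
          first | rfl | (revert heq; decide)
    · obtain ⟨t, rfl⟩ : ∃ t, m = t + 2 := ⟨m - 2, by omega⟩
      set P : ℕ := 2^(t+2) with hP
      have hP4 : 4 ≤ P := by
        have : 2^2 ≤ 2^(t+2) := Nat.pow_le_pow_right (by norm_num) (by omega)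
        simpa using this
      have h2P : 2^(t+3) = 2 * P := by rw [hP]; ring
      rcases le_or_gt k P with hkP | hkP
      · obtain ⟨H, Hinj⟩ := ih (by omega) k hk1 hkP
        have hval : ∀ i, sigma (t+3) k i =
            if i = k + P then i
            else if i ≤ P then sigma (t+2) k i + P
            else sigma (t+2) k (i - P) := by
          intro i; simp only [sigma]; rw [if_pos hkP]
        constructor
        · intro i h1 h2 h3
          rw [hval i]
          split_ifs with e1 e2
          · omega
          · have := H i h1 e2 h3; omega
          · have hi' : i - P ≠ k := by omega
            have := H (i - P) (by omega) (by omega) hi'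
            omega
        · intro i j h1 h2 h3 h4 h5 h6 heq
          rw [hval i, hval j] at heq
          split_ifs at heq with e1 e2 e3 e4 e5 e6 e7
          · omega
          · have := H j h4 e3 h6; omega
          · have := H (j - P) (by omega) (by omega) (by omega); omega
          · have := H i h1 e4 h3; omega
          · have := Hinj i j h1 e4 h3 h4 (by omega) h6 (by omega); omega
          · have hi := H i h1 e4 h3
            have hj := H (j - P) (by omega) (by omega) (by omega)
            omega
          · have := H (i - P) (by omega) (by omega) (by omega); omega
          · have hi := H (i - P) (by omega) (by omega) (by omega)
            have hj := H j h4 (by omega) h6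
            omega
          · have := Hinj (i - P) (j - P) (by omega) (by omega) (by omega)
              (by omega) (by omega) (by omega) heq
            omega
      · have hk1' : 1 ≤ k - P := by omega
        have hk2' : k - P ≤ P := by omega
        obtain ⟨H, Hinj⟩ := ih (by omega) (k - P) hk1' hk2'
        have hval : ∀ i, sigma (t+3) k i =
            if i = k - P then i
            else if i ≤ P then sigma (t+2) (k - P) i + P
            else sigma (t+2) (k - P) (i - P) := by
          intro i; simp only [sigma]; rw [if_neg (by omega)]
        constructor
        · intro i h1 h2 h3
          rw [hval i]
          split_ifs with e1 e2
          · omega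
          · have := H i h1 e2 (by omega); omega
          · have := H (i - P) (by omega) (by omega) (by omega); omega
        · intro i j h1 h2 h3 h4 h5 h6 heq
          rw [hval i, hval j] at heq
          split_ifs at heq with e1 e2 e3 e4 e5 e6 e7
          · omega
          · have := H j h4 e3 (by omega); omega
          · have := H (j - P) (by omega) (by omega) (by omega); omega
          · have := H i h1 e4 (by omega); omega
          · have := Hinj i j h1 e4 (by omega) h4 (by omega) (by omega) (by omega); omega
          · have hi := H i h1 e4 (by omega)
            have hj := H (j - P) (by omega) (by omega) (by omega)
            omega
          · have := H (i - P) (by omega) (by omega) (by omega); omega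
          · have hi := H (i - P) (by omega) (by omega) (by omega)
            have hj := H j h4 (by omega) (by omega)
            omega
          · have := Hinj (i - P) (j - P) (by omega) (by omega) (by omega)
              (by omega) (by omega) (by omega) heq
            omega


theorem stmt4 (n p : ℕ) (hn : 2 ≤ n) (hp : p = 2^n) (k : ℕ) (hk1 : 1 ≤ k) (hk2 : k ≤ p) :
    Set.BijOn (sigma n k) (Set.Icc 1 p \ {k}) (Set.Icc 1 p \ {k}) := by
  subst hp
  obtain ⟨H, Hinj⟩ := sigma_aux n hn k hk1 hk2
  have hmaps : Set.MapsTo (sigma n k) (Set.Icc 1 (2^n) \ {k}) (Set.Icc 1 (2^n) \ {k}) := by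
    intro i hi
    simp only [Set.mem_diff, Set.mem_Icc, Set.mem_singleton_iff] at hi ⊢
    have := H i hi.1.1 hi.1.2 hi.2
    exact ⟨⟨this.1, this.2.1⟩, this.2.2⟩
  have hinj : Set.InjOn (sigma n k) (Set.Icc 1 (2^n) \ {k}) := by
    intro i hi j hj heq
    simp only [Set.mem_diff, Set.mem_Icc, Set.mem_singleton_iff] at hi hj
    exact Hinj i j hi.1.1 hi.1.2 hi.2 hj.1.1 hj.1.2 hj.2 heq
  have hfin : (Set.Icc 1 (2^n) \ {k}).Finite := (Set.finite_Icc 1 (2^n)).diff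
  exact (hfin.injOn_iff_bijOn_of_mapsTo hmaps).mp hinj
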